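/- Let g be a Lie algebra and M a right g-module (locally finite) and left g-comodule (locally conilpotent) which is an AYD module over g. Define the right R(g)-module structure m · f := f(m⟦−1⟧) m⟦0⟧ using the lifted U(g)-coaction, and the left R(g)-comodule structure by dualizing the U(g)-action: m⟪−1⟫(u) m⟪0⟫ = m · u. Then M is an AYD module over the Hopf algebra R(g) of representative functions on g: ∇_{R(g)}(m · f) = S(f(3)) m⟪−1⟫ f(1) ⊗ m⟪0⟫ · f(2). -/

import Mathlib

/-!
STATEMENT 13: Let `g` be a Lie algebra and `M` a locally finite right `g`-module and
locally conilpotent left `g`-comodule which is AYD over `g`.  Equivalently (and this is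
how we formalize it, since locally conilpotent `g`-comodules are exactly `U(g)`-comodules
and AYD over `g` is AYD over `U(g)`), let `H` be a cocommutative Hopf algebra (playing
the role of `U(g)`), and `M` a right `H`-module and left `H`-comodule which is AYD over
`H` and locally finite as an `H`-module.  Define the right `R(g)`-action by
`m · f := f(m⟦₋₁⟧) m⟦₀⟧` for every representative function `f` (a linear functional
whose kernel contains a two-sided ideal of finite codimension), and the left
`R(g)`-coaction by dualizing the `H`-action.  Then `M` is an AYD module over `R(g)`:
the AYD identity `∇_{R}(m·f) = S(f₍₃₎) m⟪₋₁⟫ f₍₁₎ ⊗ m⟪₀⟫ · f₍₂₎`, evaluated against an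
arbitrary `u ∈ H` (which determines it, since `R(g) ⊆ H*` separates via evaluations),
reads `(m·f)·u = f( u₍₃₎ · (m·u₍₂₎)⟦₋₁⟧ · S(u₍₁₎) ) (m·u₍₂₎)⟦₀⟧`.
-/

attribute [-instance] LieAlgebra.ofAssociativeAlgebra
open TensorProduct LinearMap Coalgebra
set_option maxHeartbeats 2000000
set_option synthInstance.maxHeartbeats 1000000
noncomputable section

variable {k : Type} [Field k]
variable {M : Type} [AddCommGroup M] [Module k M]

section Generic
variable {H : Type} [AddCommGroup H] [Module k H]

/-- Generic right module structure. -/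
def IsModG (mul : H ⊗[k] H →ₗ[k] H) (one : H) (ρ : H →ₗ[k] M →ₗ[k] M) : Prop :=
  ρ one = LinearMap.id ∧ ∀ x y : H, ρ (mul (x ⊗ₜ[k] y)) = (ρ y) ∘ₗ (ρ x)

/-- Generic left comodule structure. -/
def IsComodG (Δ : H →ₗ[k] H ⊗[k] H) (ε : H →ₗ[k] k) (cm : M →ₗ[k] H ⊗[k] M) : Prop :=
  ((TensorProduct.assoc k H H M).toLinearMap ∘ₗ (LinearMap.rTensor M Δ) ∘ₗ cm
      = (LinearMap.lTensor H cm) ∘ₗ cm) ∧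
    ((TensorProduct.lid k M).toLinearMap ∘ₗ (LinearMap.rTensor M ε) ∘ₗ cm = LinearMap.id)

/-- The right-hand side `S(h₍₃₎) m₍₋₁₎ h₍₁₎ ⊗ m₍₀₎ · h₍₂₎` of the AYD condition. -/
def aydRHS (mul : H ⊗[k] H →ₗ[k] H) (S : H →ₗ[k] H) (Δ : H →ₗ[k] H ⊗[k] H)
    (ρ : H →ₗ[k] M →ₗ[k] M) (cm : M →ₗ[k] H ⊗[k] M) (m : M) (h : H) : H ⊗[k] M :=
  (LinearMap.rTensor M (mul ∘ₗ (TensorProduct.comm k H H).toLinearMap))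
    ((TensorProduct.assoc k H H M).symm.toLinearMap
      ((TensorProduct.map
          (mul ∘ₗ (TensorProduct.comm k H H).toLinearMap)
          ((LinearMap.rTensor M S) ∘ₗ (LinearMap.lTensor H (TensorProduct.lift ρ)) ∘ₗ
            (TensorProduct.assoc k H H M).toLinearMap ∘ₗ
              (LinearMap.rTensor M (TensorProduct.comm k H H).toLinearMap)))
        ((TensorProduct.tensorTensorTensorComm k H (H ⊗[k] H) H M)
          ((LinearMap.rTensor (H ⊗[k] M) (TensorProduct.assoc k H H H).toLinearMap)
            (((LinearMap.rTensor H Δ) (Δ h)) ⊗ₜ[k] (cm m))))))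

/-- The generic anti-Yetter–Drinfeld condition. -/
def IsAYDcond (mul : H ⊗[k] H →ₗ[k] H) (S : H →ₗ[k] H) (Δ : H →ₗ[k] H ⊗[k] H)
    (ρ : H →ₗ[k] M →ₗ[k] M) (cm : M →ₗ[k] H ⊗[k] M) : Prop :=
  ∀ (m : M) (h : H), cm (ρ h m) = aydRHS mul S Δ ρ cm m h

end Generic

variable {H : Type} [Ring H] [HopfAlgebra k H]

variable (k H) in
/-- `f ∈ H*` is a representative function: its kernel contains a two-sided ideal of
finite codimension. -/
def IsRepresentative (f : H →ₗ[k] k) : Prop :=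
  ∃ I : Submodule k H,
    (∀ x ∈ I, ∀ h : H, h * x ∈ I ∧ x * h ∈ I) ∧
    I ≤ LinearMap.ker f ∧
    FiniteDimensional k (H ⧸ I)


variable (k H) in
def cS : H ⊗[k] H →ₗ[k] H :=
  LinearMap.mul' k H ∘ₗ (TensorProduct.comm k H H).toLinearMap ∘ₗ
    LinearMap.rTensor H (HopfAlgebra.antipode (R := k) (A := H))

lemma cS_comul (hcc : (TensorProduct.comm k H H).toLinearMap ∘ₗ (Coalgebra.comul (R := k) (A := H))
      = Coalgebra.comul (R := k) (A := H)) :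
    cS k H ∘ₗ Coalgebra.comul (R := k) (A := H)
      = (Algebra.linearMap k H) ∘ₗ (Coalgebra.counit (R := k) (A := H)) := by
  have h1 : (TensorProduct.comm k H H).toLinearMap ∘ₗ
      LinearMap.rTensor H (HopfAlgebra.antipode (R := k) (A := H))
      = LinearMap.lTensor H (HopfAlgebra.antipode (R := k) (A := H)) ∘ₗ
        (TensorProduct.comm k H H).toLinearMap := by
    ext a b; simp
  rw [cS, h1]
  show LinearMap.mul' k H ∘ₗ LinearMap.lTensor H (HopfAlgebra.antipode (R := k) (A := H)) ∘ₗ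
    ((TensorProduct.comm k H H).toLinearMap ∘ₗ (Coalgebra.comul (R := k) (A := H))) = _
  rw [hcc]
  exact HopfAlgebra.mul_antipode_lTensor_comul

variable (k H) in
def comb3 : H →ₗ[k] H ⊗[k] (H ⊗[k] H) :=
  LinearMap.lTensor H (Coalgebra.comul (R := k) (A := H)) ∘ₗ Coalgebra.comul (R := k) (A := H)

variable (k H) in
def comb5 : H →ₗ[k] H ⊗[k] (H ⊗[k] (H ⊗[k] (H ⊗[k] H))) :=
  LinearMap.lTensor H (LinearMap.lTensor H (comb3 k H) ∘ₗ Coalgebra.comul (R := k) (A := H)) ∘ₗ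
    Coalgebra.comul (R := k) (A := H)

lemma lT_eta_eps :
    LinearMap.lTensor H ((Algebra.linearMap k H) ∘ₗ (Coalgebra.counit (R := k) (A := H))) ∘ₗ
      Coalgebra.comul (R := k) (A := H) = (TensorProduct.mk k H H).flip 1 := by
  rw [lTensor_comp, comp_assoc, Coalgebra.lTensor_counit_comp_comul]
  ext h
  simp

lemma rT_eta_eps :
    LinearMap.rTensor H ((Algebra.linearMap k H) ∘ₗ (Coalgebra.counit (R := k) (A := H))) ∘ₗ
      Coalgebra.comul (R := k) (A := H) = TensorProduct.mk k H H 1 := by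
  rw [rTensor_comp, comp_assoc, Coalgebra.rTensor_counit_comp_comul]
  ext h
  simp

section Nat
variable {A B C Y : Type} [AddCommGroup A] [Module k A] [AddCommGroup B] [Module k B]
  [AddCommGroup C] [Module k C] [AddCommGroup Y] [Module k Y]

lemma natA (φ : B →ₗ[k] Y) :
    rTensor C (lTensor A φ) ∘ₗ (TensorProduct.assoc k A B C).symm.toLinearMap
      = (TensorProduct.assoc k A Y C).symm.toLinearMap ∘ₗ lTensor A (rTensor C φ) := by
  ext a b c; simp

lemma natB (φ : A →ₗ[k] Y) :
    rTensor C (rTensor B φ) ∘ₗ (TensorProduct.assoc k A B C).symm.toLinearMap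
      = (TensorProduct.assoc k Y B C).symm.toLinearMap ∘ₗ rTensor (B ⊗[k] C) φ := by
  ext a b c; simp

lemma natC (φ : C →ₗ[k] Y) :
    lTensor (A ⊗[k] B) φ ∘ₗ (TensorProduct.assoc k A B C).symm.toLinearMap
      = (TensorProduct.assoc k A B Y).symm.toLinearMap ∘ₗ lTensor A (lTensor B φ) := by
  ext a b c; simp

end Nat

lemma coassoc' :
    LinearMap.rTensor H (Coalgebra.comul (R := k) (A := H)) ∘ₗ Coalgebra.comul (R := k) (A := H)
      = (TensorProduct.assoc k H H H).symm.toLinearMap ∘ₗ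
          LinearMap.lTensor H (Coalgebra.comul (R := k) (A := H)) ∘ₗ
            Coalgebra.comul (R := k) (A := H) := by
  rw [← Coalgebra.coassoc, ← comp_assoc, ← comp_assoc]
  congr 1
  ext x
  simp

section Nat2
variable {A B C Y : Type} [AddCommGroup A] [Module k A] [AddCommGroup B] [Module k B]
  [AddCommGroup C] [Module k C] [AddCommGroup Y] [Module k Y]

lemma natA_apply (φ : B →ₗ[k] Y) (z : A ⊗[k] (B ⊗[k] C)) :
    rTensor C (lTensor A φ) ((TensorProduct.assoc k A B C).symm z)
      = (TensorProduct.assoc k A Y C).symm (lTensor A (rTensor C φ) z) :=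
  LinearMap.congr_fun (natA φ) z

lemma natB_apply (φ : A →ₗ[k] Y) (z : A ⊗[k] (B ⊗[k] C)) :
    rTensor C (rTensor B φ) ((TensorProduct.assoc k A B C).symm z)
      = (TensorProduct.assoc k Y B C).symm (rTensor (B ⊗[k] C) φ z) :=
  LinearMap.congr_fun (natB φ) z

lemma natC_apply (φ : C →ₗ[k] Y) (z : A ⊗[k] (B ⊗[k] C)) :
    lTensor (A ⊗[k] B) φ ((TensorProduct.assoc k A B C).symm z)
      = (TensorProduct.assoc k A B Y).symm (lTensor A (lTensor B φ) z) :=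
  LinearMap.congr_fun (natC φ) z

lemma natF_apply {D : Type} [AddCommGroup D] [Module k D]
    (w : A ⊗[k] ((B ⊗[k] C) ⊗[k] D)) :
    (TensorProduct.assoc k A B (C ⊗[k] D))
      ((TensorProduct.assoc k (A ⊗[k] B) C D)
        (rTensor D (TensorProduct.assoc k A B C).symm.toLinearMap
          ((TensorProduct.assoc k A (B ⊗[k] C) D).symm w)))
      = lTensor A (TensorProduct.assoc k B C D).toLinearMap w := by
  have : (TensorProduct.assoc k A B (C ⊗[k] D)).toLinearMap ∘ₗ
      (TensorProduct.assoc k (A ⊗[k] B) C D).toLinearMap ∘ₗ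
      rTensor D (TensorProduct.assoc k A B C).symm.toLinearMap ∘ₗ
      (TensorProduct.assoc k A (B ⊗[k] C) D).symm.toLinearMap
      = lTensor A (TensorProduct.assoc k B C D).toLinearMap := by
    ext a b c; simp
  simpa [comp_apply] using LinearMap.congr_fun this w

end Nat2

variable (k H) in
def sigma5 : (H ⊗[k] ((H ⊗[k] H) ⊗[k] H)) ⊗[k] H →ₗ[k] H ⊗[k] (H ⊗[k] (H ⊗[k] (H ⊗[k] H))) :=
  LinearMap.lTensor H ((TensorProduct.assoc k H H (H ⊗[k] H)).toLinearMap ∘ₗ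
      (TensorProduct.assoc k (H ⊗[k] H) H H).toLinearMap) ∘ₗ
    (TensorProduct.assoc k H ((H ⊗[k] H) ⊗[k] H) H).toLinearMap

lemma treeJ (u : H) :
    sigma5 k H
      (LinearMap.rTensor H
        (LinearMap.lTensor H
          (LinearMap.rTensor H (Coalgebra.comul (R := k) (A := H)) ∘ₗ Coalgebra.comul (R := k) (A := H)))
        ((LinearMap.rTensor H (Coalgebra.comul (R := k) (A := H))) (Coalgebra.comul (R := k) (A := H) u)))
      = comb5 k H u := by
  have CA : ∀ h : H, (LinearMap.rTensor H (Coalgebra.comul (R := k) (A := H))) (Coalgebra.comul (R := k) (A := H) h)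
      = (TensorProduct.assoc k H H H).symm
          ((LinearMap.lTensor H (Coalgebra.comul (R := k) (A := H))) (Coalgebra.comul (R := k) (A := H) h)) := by
    intro h
    simpa [comp_apply] using LinearMap.congr_fun (coassoc' (k := k) (H := H)) h
  rw [coassoc', CA u]
  simp only [lTensor_comp, rTensor_comp, comp_apply, coe_comp, Function.comp_apply]
  rw [natA_apply, natA_apply, natA_apply]
  simp only [sigma5, comp_apply, coe_comp, LinearEquiv.coe_coe, Function.comp_apply,
    LinearEquiv.apply_symm_apply]
  simp only [← lTensor_comp_apply]
  simp only [comb5, coe_comp, Function.comp_apply, comp_apply]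
  refine congrArg (fun t => LinearMap.lTensor H t (Coalgebra.comul (R := k) (A := H) u)) ?_
  ext h
  simp only [comp_apply, coe_comp, Function.comp_apply, LinearEquiv.coe_coe]
  rw [CA h, natA_apply, natF_apply]
  simp only [← lTensor_comp_apply]
  rw [show (TensorProduct.assoc k H H H).toLinearMap ∘ₗ
      LinearMap.rTensor H (Coalgebra.comul (R := k) (A := H)) ∘ₗ Coalgebra.comul (R := k) (A := H)
      = comb3 k H from Coalgebra.coassoc]

section Eval
variable (f : H →ₗ[k] k) (ρ : H →ₗ[k] M →ₗ[k] M) (x : H ⊗[k] M)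

/-- `z ⊗ (w ⊗ q) ↦ f z • ρ w q`. -/
def Ev : H ⊗[k] (H ⊗[k] M) →ₗ[k] M :=
  (TensorProduct.lid k M).toLinearMap ∘ₗ LinearMap.rTensor M f ∘ₗ
    LinearMap.lTensor H (TensorProduct.lift ρ)

/-- `a ⊗ (b ⊗ v) ↦ f (a * (x₁ * b)) • ρ v x₂`. -/
def PhiL : H ⊗[k] (H ⊗[k] H) →ₗ[k] M :=
  Ev f ρ ∘ₗ
    LinearMap.rTensor (H ⊗[k] M) (LinearMap.mul' k H ∘ₗ LinearMap.lTensor H (LinearMap.mul' k H)) ∘ₗ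
    (TensorProduct.assoc k H (H ⊗[k] H) (H ⊗[k] M)).symm.toLinearMap ∘ₗ
    LinearMap.lTensor H
      (LinearMap.rTensor (H ⊗[k] M) (TensorProduct.comm k H H).toLinearMap ∘ₗ
        (TensorProduct.tensorTensorTensorComm k H H H M).toLinearMap) ∘ₗ
    (TensorProduct.assoc k H (H ⊗[k] H) (H ⊗[k] M)).toLinearMap ∘ₗ
    (TensorProduct.mk k (H ⊗[k] (H ⊗[k] H)) (H ⊗[k] M)).flip x

lemma PhiL_tmul (a b v : H) (x₁ : H) (x₂ : M) :
    PhiL f ρ (x₁ ⊗ₜ x₂) (a ⊗ₜ (b ⊗ₜ v)) = f (a * (x₁ * b)) • ρ v x₂ := by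
  simp [PhiL, Ev, mul'_apply]

def Phi2 : H ⊗[k] H →ₗ[k] M := PhiL f ρ x ∘ₗ TensorProduct.mk k H (H ⊗[k] H) 1

def Phi3 : H ⊗[k] (H ⊗[k] H) →ₗ[k] M :=
  Phi2 f ρ x ∘ₗ LinearMap.rTensor H (cS k H) ∘ₗ (TensorProduct.assoc k H H H).symm.toLinearMap

def xi4 : H ⊗[k] (H ⊗[k] (H ⊗[k] H)) →ₗ[k] H ⊗[k] (H ⊗[k] H) :=
  (TensorProduct.assoc k H H H).toLinearMap ∘ₗ
    LinearMap.rTensor H (TensorProduct.comm k H H).toLinearMap ∘ₗ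
    (TensorProduct.assoc k H H H).symm.toLinearMap ∘ₗ
    LinearMap.lTensor H (TensorProduct.comm k H H).toLinearMap ∘ₗ
    LinearMap.rTensor (H ⊗[k] H) (cS k H) ∘ₗ
    (TensorProduct.assoc k H H (H ⊗[k] H)).symm.toLinearMap

def Phi4 : H ⊗[k] (H ⊗[k] (H ⊗[k] H)) →ₗ[k] M := PhiL f ρ x ∘ₗ xi4

def Phi5 : H ⊗[k] (H ⊗[k] (H ⊗[k] (H ⊗[k] H))) →ₗ[k] M :=
  Phi4 f ρ x ∘ₗ LinearMap.lTensor H (LinearMap.lTensor H (LinearMap.lTensor H (cS k H)))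

end Eval

section Collapse
variable (f : H →ₗ[k] k) (ρ : H →ₗ[k] M →ₗ[k] M) (x : H ⊗[k] M)

lemma E3 : Phi4 f ρ x ∘ₗ LinearMap.lTensor H (LinearMap.lTensor H ((TensorProduct.mk k H H).flip 1))
    = Phi3 f ρ x := by
  ext v₁ v₂ v₃
  simp [Phi4, Phi3, Phi2, xi4]

lemma collapseK
    (hcc : (TensorProduct.comm k H H).toLinearMap ∘ₗ (Coalgebra.comul (R := k) (A := H))
      = Coalgebra.comul (R := k) (A := H)) (u : H) :
    Phi5 f ρ x (comb5 k H u) = Phi2 f ρ x ((1 : H) ⊗ₜ[k] u) := by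
  have hinner : LinearMap.lTensor H (cS k H) ∘ₗ comb3 k H = (TensorProduct.mk k H H).flip 1 := by
    rw [comb3, ← comp_assoc, ← lTensor_comp, cS_comul hcc]
    exact lT_eta_eps
  have hco : ∀ h : H, (LinearMap.lTensor H (Coalgebra.comul (R := k) (A := H)))
      (Coalgebra.comul (R := k) (A := H) h)
      = (TensorProduct.assoc k H H H)
        ((LinearMap.rTensor H (Coalgebra.comul (R := k) (A := H)))
          (Coalgebra.comul (R := k) (A := H) h)) := by
    intro h
    simpa [comp_apply] using (LinearMap.congr_fun (Coalgebra.coassoc (R := k) (A := H)) h).symm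
  simp only [Phi5, comb5, comp_apply, coe_comp, Function.comp_apply, lTensor_comp]
  simp only [← lTensor_comp_apply]
  have h2 : LinearMap.lTensor H (LinearMap.lTensor H (cS k H)) ∘ₗ
      LinearMap.lTensor H (comb3 k H) ∘ₗ Coalgebra.comul (R := k) (A := H)
      = LinearMap.lTensor H ((TensorProduct.mk k H H).flip 1) ∘ₗ
          Coalgebra.comul (R := k) (A := H) := by
    rw [← comp_assoc, ← lTensor_comp, hinner]
  rw [h2]
  simp only [comp_apply, coe_comp, Function.comp_apply, lTensor_comp_apply]
  rw [← LinearMap.comp_apply (Phi4 f ρ x), E3]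
  rw [hco u]
  simp only [Phi3, comp_apply, coe_comp, Function.comp_apply, LinearEquiv.coe_coe,
    LinearEquiv.symm_apply_apply]
  rw [← rTensor_comp_apply]
  rw [show cS k H ∘ₗ Coalgebra.comul (R := k) (A := H)
    = (Algebra.linearMap k H) ∘ₗ (Coalgebra.counit (R := k) (A := H)) from cS_comul hcc]
  have := LinearMap.congr_fun (rT_eta_eps (k := k) (H := H)) u
  simp only [comp_apply] at this
  rw [this]
  simp

end Collapse

section AydMaps
variable (f : H →ₗ[k] k) (ρ : H →ₗ[k] M →ₗ[k] M) (x : H ⊗[k] M)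

def PsiM : (H ⊗[k] H) ⊗[k] M →ₗ[k] H ⊗[k] M :=
  (LinearMap.rTensor M (HopfAlgebra.antipode (R := k) (A := H))) ∘ₗ
    (LinearMap.lTensor H (TensorProduct.lift ρ)) ∘ₗ
    (TensorProduct.assoc k H H M).toLinearMap ∘ₗ
    (LinearMap.rTensor M (TensorProduct.comm k H H).toLinearMap)

def GammaX : (H ⊗[k] H) ⊗[k] H →ₗ[k] H ⊗[k] M :=
  (LinearMap.rTensor M (LinearMap.mul' k H ∘ₗ (TensorProduct.comm k H H).toLinearMap)) ∘ₗ
    (TensorProduct.assoc k H H M).symm.toLinearMap ∘ₗ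
    (TensorProduct.map (LinearMap.mul' k H ∘ₗ (TensorProduct.comm k H H).toLinearMap) (PsiM ρ)) ∘ₗ
    (TensorProduct.tensorTensorTensorComm k H (H ⊗[k] H) H M).toLinearMap ∘ₗ
    (LinearMap.rTensor (H ⊗[k] M) (TensorProduct.assoc k H H H).toLinearMap) ∘ₗ
    (TensorProduct.mk k ((H ⊗[k] H) ⊗[k] H) (H ⊗[k] M)).flip x

def Phi1 : H ⊗[k] ((H ⊗[k] H) ⊗[k] H) →ₗ[k] H ⊗[k] M :=
  (LinearMap.rTensor M (LinearMap.mul' k H ∘ₗ (TensorProduct.comm k H H).toLinearMap)) ∘ₗ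
    (TensorProduct.assoc k H H M).symm.toLinearMap ∘ₗ
    (LinearMap.rTensor (H ⊗[k] M) (HopfAlgebra.antipode (R := k) (A := H))) ∘ₗ
    (LinearMap.lTensor H (GammaX ρ x))

def Qmap : (H ⊗[k] ((H ⊗[k] H) ⊗[k] H)) ⊗[k] H →ₗ[k] M :=
  (TensorProduct.lid k M).toLinearMap ∘ₗ
    (LinearMap.rTensor M f) ∘ₗ
    (LinearMap.rTensor M (LinearMap.mul' k H)) ∘ₗ
    (TensorProduct.assoc k H H M).symm.toLinearMap ∘ₗ
    (TensorProduct.comm k (H ⊗[k] M) H).toLinearMap ∘ₗ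
    (LinearMap.rTensor H (Phi1 ρ x))

lemma B1 : Qmap f ρ x = Phi5 f ρ x ∘ₗ sigma5 k H := by
  ext a g1 g2 g3 b
  simp only [TensorProduct.AlgebraTensorModule.curry_apply, TensorProduct.curry_apply,
    LinearMap.coe_restrictScalars]
  induction x using TensorProduct.induction_on with
  | zero =>
    simp [Qmap, Phi1, GammaX, PsiM, Phi5, Phi4, xi4, PhiL, Ev, sigma5, cS,
      mul'_apply, mul_assoc, tmul_add]
  | tmul x₁ x₂ =>
    simp [Qmap, Phi1, GammaX, PsiM, Phi5, Phi4, xi4, PhiL, Ev, sigma5, cS,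
      mul'_apply, mul_assoc]
  | add y z hy hz =>
    simp only [Qmap, Phi1, GammaX, PsiM, Phi5, Phi4, xi4, PhiL, Ev, sigma5, cS, coe_comp,
      Function.comp_apply, flip_apply, TensorProduct.mk_apply, LinearEquiv.coe_coe,
      rTensor_tmul, lTensor_tmul, map_tmul, lift.tmul, assoc_tmul, assoc_symm_tmul, comm_tmul,
      tensorTensorTensorComm_tmul, lid_tmul, mul'_apply, tmul_add, map_add, _root_.add_apply,
      LinearMap.add_apply] at hy hz ⊢
    rw [hy, hz]

lemma FL (u : H) : Phi2 f ρ x ((1 : H) ⊗ₜ[k] u)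
    = ρ u ((TensorProduct.lid k M) ((LinearMap.rTensor M f) x)) := by
  induction x using TensorProduct.induction_on with
  | zero => simp [Phi2, PhiL, Ev]
  | tmul x₁ x₂ => simp [Phi2, PhiL_tmul]
  | add y z hy hz =>
    simp only [Phi2, PhiL, coe_comp, Function.comp_apply, flip_apply, TensorProduct.mk_apply,
      tmul_add, map_add, LinearMap.add_apply, LinearEquiv.coe_coe] at hy hz ⊢
    rw [hy, hz]

end AydMaps

theorem AYD_over_representative_functions
    -- `H` is cocommutative (it plays the role of `U(g)`)
    (hcc : (TensorProduct.comm k H H).toLinearMap ∘ₗ (Coalgebra.comul (R := k) (A := H))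
      = Coalgebra.comul (R := k) (A := H))
    -- a module-comodule `M` over `H`, AYD over `H`
    (ρ : H →ₗ[k] M →ₗ[k] M) (cm : M →ₗ[k] H ⊗[k] M)
    (hmod : IsModG (LinearMap.mul' k H) 1 ρ)
    (hcomod : IsComodG (Coalgebra.comul (R := k) (A := H))
      (Coalgebra.counit (R := k) (A := H)) cm)
    (hayd : IsAYDcond (LinearMap.mul' k H) (HopfAlgebra.antipode (R := k) (A := H))
      (Coalgebra.comul (R := k) (A := H)) ρ cm)
    -- locally finite `H`-module
    (hlf : ∀ m : M, ∃ N : Submodule k M,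
      FiniteDimensional k ↥N ∧ m ∈ N ∧ ∀ (h : H), ∀ x ∈ N, ρ h x ∈ N) :
    -- then `M` is AYD over `R(g)`: for every representative function `f`, with
    -- `m · f := f(m⟦₋₁⟧) m⟦₀⟧`, the AYD identity over `R(g)` holds; evaluated on an
    -- arbitrary `u ∈ H` it reads
    -- `(m·f)·u = f( u₍₃₎ (m·u₍₂₎)⟦₋₁⟧ S(u₍₁₎) ) (m·u₍₂₎)⟦₀⟧`:
    ∀ (f : H →ₗ[k] k), IsRepresentative k H f → ∀ (u : H) (m : M),
      ρ u ((TensorProduct.lid k M) ((LinearMap.rTensor M f) (cm m)))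
        =
      (TensorProduct.lid k M)
        ((LinearMap.rTensor M f)
          ((LinearMap.rTensor M (LinearMap.mul' k H))
            ((TensorProduct.assoc k H H M).symm.toLinearMap
              ((TensorProduct.comm k (H ⊗[k] M) H).toLinearMap
                ((LinearMap.rTensor H
                    ((LinearMap.rTensor M
                        ((LinearMap.mul' k H) ∘ₗ (TensorProduct.comm k H H).toLinearMap)) ∘ₗ
                      (TensorProduct.assoc k H H M).symm.toLinearMap ∘ₗ
                        (LinearMap.rTensor (H ⊗[k] M)
                          (HopfAlgebra.antipode (R := k) (A := H))) ∘ₗ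
                          (LinearMap.lTensor H (cm ∘ₗ (ρ.flip m)))))
                  ((LinearMap.rTensor H (Coalgebra.comul (R := k) (A := H)))
                    (Coalgebra.comul (R := k) u))))))) := by
  intro f _hf u m
  have hGamma : cm ∘ₗ ρ.flip m
      = GammaX ρ (cm m) ∘ₗ (LinearMap.rTensor H (Coalgebra.comul (R := k) (A := H)) ∘ₗ
          Coalgebra.comul (R := k) (A := H)) := by
    apply LinearMap.ext; intro h
    have h1 := hayd m h
    simp only [comp_apply, coe_comp, Function.comp_apply, flip_apply]
    rw [h1]
    simp only [aydRHS, GammaX, PsiM, comp_apply, coe_comp, Function.comp_apply, flip_apply,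
      TensorProduct.mk_apply, LinearEquiv.coe_coe]
  have hPhi : (LinearMap.rTensor M
        ((LinearMap.mul' k H) ∘ₗ (TensorProduct.comm k H H).toLinearMap)) ∘ₗ
      (TensorProduct.assoc k H H M).symm.toLinearMap ∘ₗ
      (LinearMap.rTensor (H ⊗[k] M) (HopfAlgebra.antipode (R := k) (A := H))) ∘ₗ
      (LinearMap.lTensor H (cm ∘ₗ (ρ.flip m)))
      = Phi1 ρ (cm m) ∘ₗ LinearMap.lTensor H
          (LinearMap.rTensor H (Coalgebra.comul (R := k) (A := H)) ∘ₗ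
            Coalgebra.comul (R := k) (A := H)) := by
    rw [hGamma, lTensor_comp]
    rfl
  calc ρ u ((TensorProduct.lid k M) ((LinearMap.rTensor M f) (cm m)))
      = Phi2 f ρ (cm m) ((1 : H) ⊗ₜ[k] u) := (FL f ρ (cm m) u).symm
    _ = Phi5 f ρ (cm m) (comb5 k H u) := (collapseK f ρ (cm m) hcc u).symm
    _ = Phi5 f ρ (cm m) (sigma5 k H
          ((LinearMap.rTensor H
            (LinearMap.lTensor H
              (LinearMap.rTensor H (Coalgebra.comul (R := k) (A := H)) ∘ₗ
                Coalgebra.comul (R := k) (A := H))))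
            ((LinearMap.rTensor H (Coalgebra.comul (R := k) (A := H)))
              (Coalgebra.comul (R := k) (A := H) u)))) := by rw [treeJ]
    _ = Qmap f ρ (cm m)
          ((LinearMap.rTensor H
            (LinearMap.lTensor H
              (LinearMap.rTensor H (Coalgebra.comul (R := k) (A := H)) ∘ₗ
                Coalgebra.comul (R := k) (A := H))))
            ((LinearMap.rTensor H (Coalgebra.comul (R := k) (A := H)))
              (Coalgebra.comul (R := k) (A := H) u))) := by
        rw [B1]; rfl
    _ = _ := by
        rw [hPhi, rTensor_comp_apply]
        rfl

end
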